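/- Let ℓ be an odd prime number, let K = ℚ(ζ_ℓ) be the ℓ-th cyclotomic field with ring of integers O_K, and set λ = 1 − ζ_ℓ ∈ O_K. Let q be a prime number different from ℓ and let 𝔭 be a prime ideal of O_K lying over q. If there exists β ∈ O_K with β^ℓ ≡ ζ_ℓ (mod 𝔭), then there exists γ ∈ O_K with γ^ℓ ≡ q (mod λ^{ℓ+1} O_K). -/

import Mathlib

set_option maxHeartbeats 1000000
set_option synthInstance.maxHeartbeats 400000

open NumberField

/-- Let `ℓ` be an odd prime, `K = ℚ(ζ_ℓ)` with ring of integers `𝓞 K`, and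
`λ = 1 − ζ_ℓ`.  Let `q ≠ ℓ` be a prime number and `𝔭` a prime ideal of `𝓞 K` lying over `q`.
If `ζ_ℓ` is congruent to an `ℓ`-th power modulo `𝔭`, then `q` is congruent to an `ℓ`-th power
modulo `λ^{ℓ+1} 𝓞 K`. -/
theorem stmt_4 (ℓ : ℕ+) (hℓ : (ℓ : ℕ).Prime) (hodd : Odd (ℓ : ℕ))
    (K : Type*) [Field K] [Algebra ℚ K] [IsCyclotomicExtension {(ℓ : ℕ)} ℚ K] [NumberField K]
    (ζ : 𝓞 K) (hζ : IsPrimitiveRoot ζ (ℓ : ℕ))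
    (q : ℕ) (hq : q.Prime) (hqℓ : q ≠ (ℓ : ℕ))
    (𝔭 : Ideal (𝓞 K)) (h𝔭 : 𝔭.IsPrime) (hlies : ((q : ℕ) : 𝓞 K) ∈ 𝔭)
    (hβ : ∃ β : 𝓞 K, β ^ (ℓ : ℕ) - ζ ∈ 𝔭) :
    ∃ γ : 𝓞 K, γ ^ (ℓ : ℕ) - (q : 𝓞 K) ∈ Ideal.span {(1 - ζ) ^ ((ℓ : ℕ) + 1)} := by
  classical
  obtain ⟨β, hβmem⟩ := hβ
  haveI hqf : Fact q.Prime := ⟨hq⟩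
  haveI hlf : Fact (ℓ : ℕ).Prime := ⟨hℓ⟩
  haveI := h𝔭
  have hl2 : 2 ≤ (ℓ : ℕ) := hℓ.two_le
  have hlne2 : (ℓ : ℕ) ≠ 2 := by
    intro h; rw [h] at hodd; exact (by decide : ¬ Odd 2) hodd
  have hl3 : 3 ≤ (ℓ : ℕ) := by omega
  set F := 𝓞 K ⧸ 𝔭 with hF
  set π := Ideal.Quotient.mk 𝔭 with hπ
  haveI : Nontrivial F := Ideal.Quotient.nontrivial_iff.mpr h𝔭.ne_top
  have hq0 : ((q : ℕ) : F) = 0 := by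
    rw [← map_natCast π]
    exact Ideal.Quotient.eq_zero_iff_mem.mpr hlies
  haveI hcharF : CharP F q := by
    have hdvd : ringChar F ∣ q := ringChar.dvd hq0
    rcases (Nat.dvd_prime hq).mp hdvd with h1 | hqc
    · exact absurd h1 (CharP.ringChar_ne_one)
    · exact ringChar.of_eq hqc
  -- basic facts about the images of ζ and β in F
  have hζpow : (π ζ) ^ (ℓ : ℕ) = 1 := by
    rw [← map_pow, hζ.pow_eq_one, map_one]
  have hζne1 : π ζ ≠ 1 := by
    intro h
    have hsum : (∑ i ∈ Finset.range (ℓ : ℕ), ζ ^ i) = 0 :=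
      hζ.geom_sum_eq_zero (by omega)
    have : ((ℓ : ℕ) : F) = 0 := by
      have := congrArg π hsum
      simp only [map_sum, map_pow, h, one_pow, Finset.sum_const, Finset.card_range,
        nsmul_eq_mul, mul_one, map_zero] at this
      exact this
    have hlmem : (((ℓ : ℕ) : 𝓞 K)) ∈ 𝔭 := by
      rw [← map_natCast π] at this
      exact Ideal.Quotient.eq_zero_iff_mem.mp this
    have hcop : IsCoprime (q : ℤ) ((ℓ : ℕ) : ℤ) := by
      rw [Int.isCoprime_iff_gcd_eq_one]
      exact_mod_cast (Nat.coprime_primes hq hℓ).mpr hqℓ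
    obtain ⟨a, b, hab⟩ := hcop
    have hone : (1 : 𝓞 K) ∈ 𝔭 := by
      have := congrArg (fun z : ℤ => (z : 𝓞 K)) hab
      push_cast at this
      rw [← this]
      exact Ideal.add_mem _ (Ideal.mul_mem_left _ _ hlies)
        (Ideal.mul_mem_left _ _ hlmem)
    exact h𝔭.ne_top (Ideal.eq_top_of_isUnit_mem _ hone isUnit_one)
  have hβζ : (π β) ^ (ℓ : ℕ) = π ζ := by
    rw [← map_pow]
    have := Ideal.Quotient.eq_zero_iff_mem.mpr hβmem
    rw [map_sub, sub_eq_zero] at this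
    exact this
  have hβpow : (π β) ^ ((ℓ : ℕ) ^ 2) = 1 := by
    rw [sq, pow_mul, hβζ, hζpow]
  have hβne0 : π β ≠ 0 := by
    intro h
    rw [h, zero_pow (by positivity)] at hβpow
    exact zero_ne_one hβpow
  -- order of β mod 𝔭 is ℓ²
  have hord : orderOf (π β) = (ℓ : ℕ) ^ 2 := by
    have hdvd := orderOf_dvd_of_pow_eq_one hβpow
    obtain ⟨m, hm2, hmeq⟩ := (Nat.dvd_prime_pow hℓ).mp hdvd
    interval_cases m
    · rw [pow_zero] at hmeq
      have : π β = 1 := orderOf_eq_one_iff.mp hmeq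
      rw [this, one_pow] at hβζ
      exact absurd hβζ.symm hζne1
    · rw [pow_one] at hmeq
      have : (π β) ^ (ℓ : ℕ) = 1 := by
        rw [← hmeq]; exact pow_orderOf_eq_one _
      rw [hβζ] at this
      exact absurd this hζne1
    · exact hmeq
  -- Frobenius iterated (ℓ-1) times is the identity on F
  haveI : ExpChar F q := ExpChar.prime hq
  let φ : F →+* F := iterateFrobenius F q ((ℓ : ℕ) - 1)
  have hqmod : ∃ c : ℕ, q ^ ((ℓ : ℕ) - 1) = (ℓ : ℕ) * c + 1 := by
    have hz : ((q : ℕ) : ZMod (ℓ : ℕ)) ≠ 0 := by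
      rw [Ne, ZMod.natCast_eq_zero_iff]
      exact fun hd => hqℓ ((Nat.prime_dvd_prime_iff_eq hℓ hq).mp hd).symm
    have h1 : ((q : ℕ) : ZMod (ℓ : ℕ)) ^ ((ℓ : ℕ) - 1) = 1 :=
      ZMod.pow_card_sub_one_eq_one hz
    have hmod : q ^ ((ℓ : ℕ) - 1) ≡ 1 [MOD (ℓ : ℕ)] := by
      have := (ZMod.natCast_eq_natCast_iff (q ^ ((ℓ : ℕ) - 1)) 1 (ℓ : ℕ)).mp (by push_cast; exact h1)
      exact this
    have h1le : 1 ≤ q ^ ((ℓ : ℕ) - 1) := Nat.one_le_pow _ _ hq.pos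
    obtain ⟨c, hc⟩ := (Nat.modEq_iff_dvd' h1le).mp hmod.symm
    exact ⟨c, by omega⟩
  have hφζ : φ (π ζ) = π ζ := by
    obtain ⟨c, hc⟩ := hqmod
    have hdef : φ (π ζ) = (π ζ) ^ (q ^ ((ℓ : ℕ) - 1)) := rfl
    rw [hdef, hc, pow_add, pow_mul, hζpow, one_pow, pow_one, one_mul]
  haveI hcycQ : @IsCyclotomicExtension {(ℓ : ℕ)} ℚ K _ _ (DivisionRing.toRatAlgebra) := by
    rwa [Subsingleton.elim (DivisionRing.toRatAlgebra : Algebra ℚ K) ‹Algebra ℚ K›]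
  haveI : IsCyclotomicExtension {(ℓ : ℕ)} ℤ (𝓞 K) :=
    IsCyclotomicExtension.ringOfIntegers (n := (ℓ : ℕ))
  have hadj : Algebra.adjoin ℤ ({ζ} : Set (𝓞 K)) = ⊤ :=
    IsCyclotomicExtension.adjoin_primitive_root_eq_top hζ
  have hφfix : ∀ x : 𝓞 K, φ (π x) = π x := by
    intro x
    have hx : x ∈ Algebra.adjoin ℤ ({ζ} : Set (𝓞 K)) := by
      rw [hadj]; trivial
    induction hx using Algebra.adjoin_induction with
    | mem y hy => rw [Set.mem_singleton_iff] at hy; rw [hy]; exact hφζ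
    | algebraMap r => simp only [algebraMap_int_eq, eq_intCast, map_intCast]
    | add y z hy hz ihy ihz => rw [map_add, map_add, ihy, ihz]
    | mul y z hy hz ihy ihz => rw [map_mul, map_mul, ihy, ihz]
  have hβfix : (π β) ^ (q ^ ((ℓ : ℕ) - 1)) = π β := by
    have h := hφfix β
    have hdef : φ (π β) = (π β) ^ (q ^ ((ℓ : ℕ) - 1)) := rfl
    rwa [hdef] at h
  -- deduce ℓ² ∣ q^(ℓ-1) - 1
  have hNpos : 1 ≤ q ^ ((ℓ : ℕ) - 1) := Nat.one_le_pow _ _ hq.pos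
  have hβone : (π β) ^ (q ^ ((ℓ : ℕ) - 1) - 1) = 1 := by
    have h1 : (π β) ^ (q ^ ((ℓ : ℕ) - 1) - 1) * π β = 1 * π β := by
      rw [one_mul, ← pow_succ, Nat.sub_add_cancel hNpos, hβfix]
    exact mul_right_cancel₀ hβne0 h1
  have hdvd2 : (ℓ : ℕ) ^ 2 ∣ q ^ ((ℓ : ℕ) - 1) - 1 := by
    rw [← hord]
    exact orderOf_dvd_of_pow_eq_one hβone
  -- (1 - ζ)^(ℓ-1) divides ℓ in 𝓞 K
  have hstepA : (1 - ζ) ^ ((ℓ : ℕ) - 1) ∣ (((ℓ : ℕ) : 𝓞 K)) := by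
    have hcyc : Polynomial.cyclotomic (ℓ : ℕ) (𝓞 K) =
        ∏ μ ∈ primitiveRoots (ℓ : ℕ) (𝓞 K), (Polynomial.X - Polynomial.C μ) :=
      Polynomial.cyclotomic_eq_prod_X_sub_primitiveRoots hζ
    have heval : (((ℓ : ℕ) : 𝓞 K)) = ∏ μ ∈ primitiveRoots (ℓ : ℕ) (𝓞 K), (1 - μ) := by
      have h1 := Polynomial.eval_one_cyclotomic_prime (R := 𝓞 K) (p := (ℓ : ℕ))
      rw [hcyc] at h1
      simp only [Polynomial.eval_prod, Polynomial.eval_sub, Polynomial.eval_X,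
        Polynomial.eval_one, Polynomial.eval_C] at h1
      exact h1.symm
    have hcard : (primitiveRoots (ℓ : ℕ) (𝓞 K)).card = (ℓ : ℕ) - 1 := by
      rw [hζ.card_primitiveRoots, Nat.totient_prime hℓ]
    rw [heval, ← hcard, ← Finset.prod_const]
    refine Finset.prod_dvd_prod_of_dvd _ _ ?_
    intro μ hμ
    have hμ1 : μ ^ (ℓ : ℕ) = 1 :=
      ((mem_primitiveRoots (by omega)).mp hμ).pow_eq_one
    haveI : NeZero (ℓ : ℕ) := ⟨by omega⟩
    obtain ⟨i, _, hi⟩ := hζ.eq_pow_of_pow_eq_one hμ1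
    rw [← hi]
    have := sub_dvd_pow_sub_pow (1 : 𝓞 K) ζ i
    rwa [one_pow] at this
  -- conclude
  refine ⟨(q : 𝓞 K), ?_⟩
  rw [Ideal.mem_span_singleton]
  -- ℓ² ∣ q^ℓ - q in ℤ
  obtain ⟨c, hc⟩ := hdvd2
  have hZ : ((ℓ : ℕ) : ℤ) ^ 2 ∣ (q : ℤ) ^ (ℓ : ℕ) - q := by
    have hqpow : (q : ℤ) ^ ((ℓ : ℕ) - 1) - 1 = ((ℓ : ℕ) : ℤ) ^ 2 * c := by
      have := congrArg (fun n : ℕ => (n : ℤ)) hc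
      push_cast [Nat.cast_sub hNpos] at this
      push_cast
      linarith
    have hsplit : (q : ℤ) ^ (ℓ : ℕ) - q = q * ((q : ℤ) ^ ((ℓ : ℕ) - 1) - 1) := by
      have h : (q : ℤ) ^ (ℓ : ℕ) = (q : ℤ) ^ ((ℓ : ℕ) - 1) * q := by
        rw [← pow_succ]
        congr 1
        omega
      rw [h]
      ring
    rw [hsplit, hqpow]
    exact ⟨q * c, by ring⟩
  -- push to 𝓞 K
  have hOK : (((ℓ : ℕ) : 𝓞 K)) ^ 2 ∣ (q : 𝓞 K) ^ (ℓ : ℕ) - q := by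
    obtain ⟨d, hd⟩ := hZ
    refine ⟨(d : 𝓞 K), ?_⟩
    have := congrArg (fun z : ℤ => (z : 𝓞 K)) hd
    push_cast at this
    exact_mod_cast this
  -- (1-ζ)^(ℓ+1) ∣ (1-ζ)^(2(ℓ-1)) ∣ ℓ²
  have hpowdvd : (1 - ζ) ^ ((ℓ : ℕ) + 1) ∣ (((ℓ : ℕ) : 𝓞 K)) ^ 2 := by
    have h1 : (1 - ζ) ^ ((ℓ : ℕ) + 1) ∣ (1 - ζ) ^ (2 * ((ℓ : ℕ) - 1)) :=
      pow_dvd_pow _ (by omega)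
    have h2 : (1 - ζ) ^ (2 * ((ℓ : ℕ) - 1)) ∣ (((ℓ : ℕ) : 𝓞 K)) ^ 2 := by
      rw [mul_comm, pow_mul]
      exact pow_dvd_pow_of_dvd hstepA 2
    exact h1.trans h2
  exact hpowdvd.trans hOK
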